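/- Let U ⊆ ℂ⁴ be open with coordinates (a,b,q,r), and let p : U → ℂ be a holomorphic function with p(x) ≠ 0 and p² = q³ + aq + b at every point of U. Define vector fields on U by X_∞ = ∂/∂a − (r/p)·∂/∂q − ((r²(3q²+a) − qpr)/(2p³))·∂/∂r and Y_∞ = ∂/∂b + (r/(2p²))·∂/∂r. Then the Lie bracket [X_∞, Y_∞] vanishes identically on U. -/

import Mathlib

/-- The Lie bracket of vector fields on an open subset of a complex normed space:
`[X,Y](x) = DY(x)(X(x)) − DX(x)(Y(x))`. -/
noncomputable def vecBracket {E : Type*} [NormedAddCommGroup E] [NormedSpace ℂ E]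
    (X Y : E → E) (x : E) : E :=
  fderiv ℂ Y x (X x) - fderiv ℂ X x (Y x)

set_option maxHeartbeats 1000000 in
/-- The `ε → ∞` limits `X_∞`, `Y_∞` of the isomonodromy flows of the deformed cubic
oscillator defining the A₂-quiver Joyce structure commute.  Coordinates on
`U ⊆ ℂ⁴` are `(a,b,q,r) = (x.1, x.2.1, x.2.2.1, x.2.2.2)`, and `p` is holomorphic,
nonvanishing, with `p² = q³ + aq + b` on `U`. -/
theorem A2_infinity_flows_commute (U : Set (ℂ × ℂ × ℂ × ℂ)) (hU : IsOpen U)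
    (p : ℂ × ℂ × ℂ × ℂ → ℂ) (hp : DifferentiableOn ℂ p U)
    (hp0 : ∀ x ∈ U, p x ≠ 0)
    (hpsq : ∀ x ∈ U, p x ^ 2 = x.2.2.1 ^ 3 + x.1 * x.2.2.1 + x.2.1) :
    ∀ x ∈ U,
      vecBracket
        (fun y => (1, 0, -(y.2.2.2 / p y),
          -((y.2.2.2 ^ 2 * (3 * y.2.2.1 ^ 2 + y.1) - y.2.2.1 * p y * y.2.2.2) /
              (2 * p y ^ 3))))
        (fun y => (0, 1, 0, y.2.2.2 / (2 * p y ^ 2))) x = 0 := by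
  intro x hx
  have hxU : U ∈ nhds x := hU.mem_nhds hx
  have hd : DifferentiableAt ℂ p x := (hp x hx).differentiableAt hxU
  have hpne : p x ≠ 0 := hp0 x hx
  have hP : HasFDerivAt p (fderiv ℂ p x) x := hd.hasFDerivAt
  set P := fderiv ℂ p x with hPdef
  -- coordinate projections
  have hA : HasFDerivAt (fun y : ℂ × ℂ × ℂ × ℂ => y.1)
      (ContinuousLinearMap.fst ℂ ℂ (ℂ × ℂ × ℂ)) x :=
    (ContinuousLinearMap.fst ℂ ℂ (ℂ × ℂ × ℂ)).hasFDerivAt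
  have hB : HasFDerivAt (fun y : ℂ × ℂ × ℂ × ℂ => y.2.1)
      ((ContinuousLinearMap.fst ℂ ℂ (ℂ × ℂ)).comp
        (ContinuousLinearMap.snd ℂ ℂ (ℂ × ℂ × ℂ))) x :=
    ((ContinuousLinearMap.fst ℂ ℂ (ℂ × ℂ)).comp
        (ContinuousLinearMap.snd ℂ ℂ (ℂ × ℂ × ℂ))).hasFDerivAt
  have hQ : HasFDerivAt (fun y : ℂ × ℂ × ℂ × ℂ => y.2.2.1)
      ((ContinuousLinearMap.fst ℂ ℂ ℂ).comp
        ((ContinuousLinearMap.snd ℂ ℂ (ℂ × ℂ)).comp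
          (ContinuousLinearMap.snd ℂ ℂ (ℂ × ℂ × ℂ)))) x :=
    ((ContinuousLinearMap.fst ℂ ℂ ℂ).comp
        ((ContinuousLinearMap.snd ℂ ℂ (ℂ × ℂ)).comp
          (ContinuousLinearMap.snd ℂ ℂ (ℂ × ℂ × ℂ)))).hasFDerivAt
  have hR : HasFDerivAt (fun y : ℂ × ℂ × ℂ × ℂ => y.2.2.2)
      ((ContinuousLinearMap.snd ℂ ℂ ℂ).comp
        ((ContinuousLinearMap.snd ℂ ℂ (ℂ × ℂ)).comp
          (ContinuousLinearMap.snd ℂ ℂ (ℂ × ℂ × ℂ)))) x :=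
    ((ContinuousLinearMap.snd ℂ ℂ ℂ).comp
        ((ContinuousLinearMap.snd ℂ ℂ (ℂ × ℂ)).comp
          (ContinuousLinearMap.snd ℂ ℂ (ℂ × ℂ × ℂ)))).hasFDerivAt
  -- derivatives of p-powers
  have hP2 : HasFDerivAt (fun y => p y ^ 2) _ x :=
    (hasDerivAt_pow 2 (p x)).comp_hasFDerivAt x hP
  have hP3 : HasFDerivAt (fun y => p y ^ 3) _ x :=
    (hasDerivAt_pow 3 (p x)).comp_hasFDerivAt x hP
  -- the key relation for P coming from p² = q³ + aq + b
  have hgEq : (fun y => p y ^ 2) =ᶠ[nhds x]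
      (fun y : ℂ × ℂ × ℂ × ℂ => y.2.2.1 ^ 3 + y.1 * y.2.2.1 + y.2.1) :=
    Filter.eventually_of_mem hxU hpsq
  have hQ3 : HasFDerivAt (fun y : ℂ × ℂ × ℂ × ℂ => y.2.2.1 ^ 3) _ x :=
    (hasDerivAt_pow 3 x.2.2.1).comp_hasFDerivAt
      (f := fun y : ℂ × ℂ × ℂ × ℂ => y.2.2.1) x hQ
  have hG : HasFDerivAt
      (fun y : ℂ × ℂ × ℂ × ℂ => y.2.2.1 ^ 3 + y.1 * y.2.2.1 + y.2.1) _ x :=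
    (hQ3.add (hA.mul hQ)).add hB
  have hP2' : HasFDerivAt (fun y => p y ^ 2) _ x := hG.congr_of_eventuallyEq hgEq
  have hkey := hP2.unique hP2'
  have key : ∀ v : ℂ × ℂ × ℂ × ℂ, 2 * p x * P v =
      v.1 * x.2.2.1 + v.2.1 + (3 * x.2.2.1 ^ 2 + x.1) * v.2.2.1 := by
    intro v
    have h := DFunLike.congr_fun hkey v
    simp only [ContinuousLinearMap.smul_apply, ContinuousLinearMap.add_apply,
      ContinuousLinearMap.coe_comp', Function.comp_apply,
      ContinuousLinearMap.coe_fst', ContinuousLinearMap.coe_snd',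
      smul_eq_mul, pow_one, Nat.cast_ofNat] at h
    norm_num at h
    linear_combination h
  -- derivative of Y := (0,1,0, r/(2p²))
  have h2p2 : HasFDerivAt (fun y => 2 * p y ^ 2) _ x := hP2.const_mul 2
  have h2p2ne : 2 * p x ^ 2 ≠ 0 := by
    simp [hpne]
  have hinv2 : HasFDerivAt (fun y => (2 * p y ^ 2)⁻¹) _ x :=
    (hasDerivAt_inv h2p2ne).comp_hasFDerivAt x h2p2
  have hY4 : HasFDerivAt (fun y : ℂ × ℂ × ℂ × ℂ => y.2.2.2 / (2 * p y ^ 2)) _ x :=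
    hR.mul hinv2
  have hY : HasFDerivAt
      (fun y : ℂ × ℂ × ℂ × ℂ => ((0 : ℂ), (1 : ℂ), (0 : ℂ), y.2.2.2 / (2 * p y ^ 2))) _ x :=
    HasFDerivAt.prodMk (hasFDerivAt_const (0 : ℂ) x) (HasFDerivAt.prodMk (hasFDerivAt_const (1 : ℂ) x)
      (HasFDerivAt.prodMk (hasFDerivAt_const (0 : ℂ) x) hY4))
  -- derivative of X
  have hinvp : HasFDerivAt (fun y => (p y)⁻¹) _ x :=
    (hasDerivAt_inv hpne).comp_hasFDerivAt x hP
  have hX3 : HasFDerivAt (fun y : ℂ × ℂ × ℂ × ℂ => -(y.2.2.2 / p y)) _ x :=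
    (hR.mul hinvp).neg
  have hR2 : HasFDerivAt (fun y : ℂ × ℂ × ℂ × ℂ => y.2.2.2 ^ 2) _ x :=
    (hasDerivAt_pow 2 x.2.2.2).comp_hasFDerivAt
      (f := fun y : ℂ × ℂ × ℂ × ℂ => y.2.2.2) x hR
  have hQ2 : HasFDerivAt (fun y : ℂ × ℂ × ℂ × ℂ => y.2.2.1 ^ 2) _ x :=
    (hasDerivAt_pow 2 x.2.2.1).comp_hasFDerivAt
      (f := fun y : ℂ × ℂ × ℂ × ℂ => y.2.2.1) x hQ
  have hnum : HasFDerivAt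
      (fun y : ℂ × ℂ × ℂ × ℂ =>
        y.2.2.2 ^ 2 * (3 * y.2.2.1 ^ 2 + y.1) - y.2.2.1 * p y * y.2.2.2) _ x :=
    (hR2.mul ((hQ2.const_mul 3).add hA)).sub ((hQ.mul hP).mul hR)
  have h2p3 : HasFDerivAt (fun y => 2 * p y ^ 3) _ x := hP3.const_mul 2
  have h2p3ne : 2 * p x ^ 3 ≠ 0 := by simp [hpne]
  have hinv3 : HasFDerivAt (fun y => (2 * p y ^ 3)⁻¹) _ x :=
    (hasDerivAt_inv h2p3ne).comp_hasFDerivAt x h2p3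
  have hX4 : HasFDerivAt
      (fun y : ℂ × ℂ × ℂ × ℂ =>
        -((y.2.2.2 ^ 2 * (3 * y.2.2.1 ^ 2 + y.1) - y.2.2.1 * p y * y.2.2.2) /
            (2 * p y ^ 3))) _ x :=
    (hnum.mul hinv3).neg
  have hX : HasFDerivAt
      (fun y : ℂ × ℂ × ℂ × ℂ =>
        ((1 : ℂ), (0 : ℂ), -(y.2.2.2 / p y),
          -((y.2.2.2 ^ 2 * (3 * y.2.2.1 ^ 2 + y.1) - y.2.2.1 * p y * y.2.2.2) /
              (2 * p y ^ 3)))) _ x :=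
    HasFDerivAt.prodMk (hasFDerivAt_const (1 : ℂ) x) (HasFDerivAt.prodMk (hasFDerivAt_const (0 : ℂ) x)
      (hX3.prodMk hX4))
  -- now compute the bracket
  have hsq : p x ^ 2 = x.2.2.1 ^ 3 + x.1 * x.2.2.1 + x.2.1 := hpsq x hx
  have k1 := key (1, 0, -(x.2.2.2 / p x),
    -((x.2.2.2 ^ 2 * (3 * x.2.2.1 ^ 2 + x.1) - x.2.2.1 * p x * x.2.2.2) /
        (2 * p x ^ 3)))
  have k2 := key (0, 1, 0, x.2.2.2 / (2 * p x ^ 2))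
  simp only at k1 k2
  rw [vecBracket, hX.fderiv, hY.fderiv]
  simp only [ContinuousLinearMap.prod_apply, ContinuousLinearMap.add_apply,
    ContinuousLinearMap.smul_apply, ContinuousLinearMap.coe_comp',
    Function.comp_apply, ContinuousLinearMap.coe_fst', ContinuousLinearMap.coe_snd',
    ContinuousLinearMap.neg_apply, ContinuousLinearMap.sub_apply,
    ContinuousLinearMap.zero_apply, smul_eq_mul, pow_one, Nat.cast_ofNat,
    Prod.mk_sub_mk, Prod.mk_eq_zero, sub_zero, zero_sub, sub_self, neg_eq_zero]
  norm_num at k1 k2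
  have hPY : P (0, 1, 0, x.2.2.2 / (2 * p x ^ 2)) = 1 / (2 * p x) := by
    field_simp
    linear_combination k2
  have hPX : P (1, 0, -(x.2.2.2 / p x),
      -((x.2.2.2 ^ 2 * (3 * x.2.2.1 ^ 2 + x.1) - x.2.2.1 * p x * x.2.2.2) /
          (2 * p x ^ 3))) =
      (x.2.2.1 * p x - (3 * x.2.2.1 ^ 2 + x.1) * x.2.2.2) / (2 * p x ^ 2) := by
    have hrp : x.2.2.2 / p x * p x = x.2.2.2 := div_mul_cancel₀ _ hpne
    rw [eq_div_iff (by simp [hpne])]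
    linear_combination p x * k1 - (3 * x.2.2.1 ^ 2 + x.1) * hrp
  refine ⟨trivial, trivial, ?_, ?_⟩
  · rw [hPY]
    field_simp
    ring
  · rw [hPX, hPY]
    simp only [Pi.mul_apply, Pi.add_apply]
    field_simp
    ring_nf
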